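/- Suppose all entries of Γ are nonnegative, γ_i · (Σ_{j∈N} Γ_{ij}) < 1 with γ_i > 0 for every i ∈ N₂, and a_i > Σ_{j≠i, j∈N} Γ_{ij} for every i ∈ N₁. Then Γ̄ is invertible, and u* = Γ̄⁻¹ b̄ is the unique vector satisfying simultaneously Γ̃u* = b̃ and Γ̂u* = b̂; in particular u* belongs to the feasible set F = {u : Γ̃u = b̃, Γ̂u ≥ b̂}. -/

import Mathlib

open Matrix Finset Filter Topology

section Defs

variable {m n : ℕ}

/-- Γ̃ ∈ ℝ^{m×N}: rows of the game players. Γ̃_{ii} = a_i, Γ̃_{ij} = Γ_{ij} for j ≠ i. -/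
def GammaTilde (Γ : Matrix (Fin m ⊕ Fin n) (Fin m ⊕ Fin n) ℝ) (a : Fin m → ℝ) :
    Matrix (Fin m) (Fin m ⊕ Fin n) ℝ :=
  Matrix.of fun i j => if j = Sum.inl i then a i else Γ (Sum.inl i) j

/-- Γ̂ ∈ ℝ^{n×N}: rows of the target seekers. Γ̂_{kk} = 1 - γ_kΓ_{kk}, Γ̂_{kj} = -γ_kΓ_{kj}. -/
def GammaHat (Γ : Matrix (Fin m ⊕ Fin n) (Fin m ⊕ Fin n) ℝ) (γ : Fin n → ℝ) :
    Matrix (Fin n) (Fin m ⊕ Fin n) ℝ :=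
  Matrix.of fun k j =>
    if j = Sum.inr k then 1 - γ k * Γ (Sum.inr k) (Sum.inr k) else -(γ k * Γ (Sum.inr k) j)

/-- Γ̄ ∈ ℝ^{N×N}: Γ̃ stacked above Γ̂. -/
def GammaBar (Γ : Matrix (Fin m ⊕ Fin n) (Fin m ⊕ Fin n) ℝ) (a : Fin m → ℝ) (γ : Fin n → ℝ) :
    Matrix (Fin m ⊕ Fin n) (Fin m ⊕ Fin n) ℝ :=
  Matrix.fromRows (GammaTilde Γ a) (GammaHat Γ γ)

/-- b̃ ∈ ℝ^m: b̃_i = a_iβ_i/α_i - n_{0,i}. -/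
noncomputable def bTilde (n0 : Fin m ⊕ Fin n → ℝ) (α β a : Fin m → ℝ) : Fin m → ℝ :=
  fun i => a i * β i / α i - n0 (Sum.inl i)

/-- b̂ ∈ ℝ^n: b̂_k = γ_k n_{0,k}. -/
def bHat (n0 : Fin m ⊕ Fin n → ℝ) (γ : Fin n → ℝ) : Fin n → ℝ :=
  fun k => γ k * n0 (Sum.inr k)

/-- b̄ ∈ ℝ^N: b̃ stacked above b̂. -/
noncomputable def bBar (n0 : Fin m ⊕ Fin n → ℝ) (α β a : Fin m → ℝ) (γ : Fin n → ℝ) : Fin m ⊕ Fin n → ℝ :=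
  Sum.elim (bTilde n0 α β a) (bHat n0 γ)

/-- max norm of a vector -/
noncomputable def vecNormInf {ι : Type*} [Fintype ι] (v : ι → ℝ) : ℝ := ⨆ i, |v i|

/-- induced ∞-norm of a matrix: max absolute row sum -/
noncomputable def matNormInf {ι κ : Type*} [Fintype ι] [Fintype κ] (A : Matrix ι κ ℝ) : ℝ :=
  ⨆ i, ∑ j, |A i j|

/-- iteration map of the distributed algorithm -/
noncomputable def iterMap (Γ : Matrix (Fin m ⊕ Fin n) (Fin m ⊕ Fin n) ℝ)
    (n0 : Fin m ⊕ Fin n → ℝ) (α β a : Fin m → ℝ) (γ : Fin n → ℝ) :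
    (Fin m ⊕ Fin n → ℝ) → (Fin m ⊕ Fin n → ℝ) := fun u =>
  Sum.elim
    (fun i => β i / α i -
      (1 / a i) * (n0 (Sum.inl i) + ∑ j ∈ univ.erase (Sum.inl i), Γ (Sum.inl i) j * u j))
    (fun k => (γ k / (1 - γ k * Γ (Sum.inr k) (Sum.inr k))) *
      (n0 (Sum.inr k) + ∑ j ∈ univ.erase (Sum.inr k), Γ (Sum.inr k) j * u j))

end Defs

/-- Under the diagonal-dominance hypotheses, Γ̄ is invertible and
u* = Γ̄⁻¹b̄ is the unique vector with Γ̃u* = b̃ and Γ̂u* = b̂; in particular u* is in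
the feasible set F = {u : Γ̃u = b̃, Γ̂u ≥ b̂}. -/
theorem statement3 (m n : ℕ) (hm : 0 < m) (hn : 0 < n)
    (Γ : Matrix (Fin m ⊕ Fin n) (Fin m ⊕ Fin n) ℝ) (hΓ : ∀ i j, 0 ≤ Γ i j)
    (n0 : Fin m ⊕ Fin n → ℝ) (α β a : Fin m → ℝ) (γ : Fin n → ℝ)
    (hαpos : ∀ i, 0 < α i) (hβpos : ∀ i, 0 < β i) (hapos : ∀ i, 0 < a i)
    (hγpos : ∀ k, 0 < γ k)
    (hγ : ∀ k : Fin n, γ k * ∑ j, Γ (Sum.inr k) j < 1)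
    (ha : ∀ i : Fin m, ∑ j ∈ univ.erase (Sum.inl i), Γ (Sum.inl i) j < a i) :
    IsUnit (GammaBar Γ a γ) ∧
    (∀ u : Fin m ⊕ Fin n → ℝ,
      ((GammaTilde Γ a).mulVec u = bTilde n0 α β a ∧
        (GammaHat Γ γ).mulVec u = bHat n0 γ) ↔
      u = (GammaBar Γ a γ)⁻¹.mulVec (bBar n0 α β a γ)) ∧
    ((GammaTilde Γ a).mulVec ((GammaBar Γ a γ)⁻¹.mulVec (bBar n0 α β a γ)) =
        bTilde n0 α β a ∧
      ∀ k, bHat n0 γ k ≤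
        (GammaHat Γ γ).mulVec ((GammaBar Γ a γ)⁻¹.mulVec (bBar n0 α β a γ)) k) := by

  -- strict diagonal dominance of GammaBar
  have hdom : ∀ k, ∑ j ∈ Finset.univ.erase k, ‖GammaBar Γ a γ k j‖ < ‖GammaBar Γ a γ k k‖ := by
    rintro (i | k)
    · have h1 : ∀ j ∈ Finset.univ.erase (Sum.inl i : Fin m ⊕ Fin n),
          ‖GammaBar Γ a γ (Sum.inl i) j‖ = Γ (Sum.inl i) j := by
        intro j hj
        simp only [Finset.mem_erase] at hj
        rw [GammaBar, Matrix.fromRows_apply_inl]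
        simp [GammaBar, GammaTilde, Matrix.fromRows, hj.1, abs_of_nonneg (hΓ _ _)]
      rw [Finset.sum_congr rfl h1]
      have : GammaBar Γ a γ (Sum.inl i) (Sum.inl i) = a i := by
        rw [GammaBar, Matrix.fromRows_apply_inl]
        simp [GammaBar, GammaTilde, Matrix.fromRows]
      rw [this, Real.norm_eq_abs, abs_of_pos (hapos i)]
      exact ha i
    · have hkk : Γ (Sum.inr k) (Sum.inr k) ≤ ∑ j, Γ (Sum.inr k) j :=
        Finset.single_le_sum (f := fun j => Γ (Sum.inr k) j) (fun j _ => hΓ _ _) (Finset.mem_univ _)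
      have hdiag : 0 < 1 - γ k * Γ (Sum.inr k) (Sum.inr k) := by
        have := hγ k
        nlinarith [mul_le_mul_of_nonneg_left hkk (hγpos k).le]
      have h1 : ∀ j ∈ Finset.univ.erase (Sum.inr k : Fin m ⊕ Fin n),
          ‖GammaBar Γ a γ (Sum.inr k) j‖ = γ k * Γ (Sum.inr k) j := by
        intro j hj
        simp only [Finset.mem_erase] at hj
        rw [GammaBar, Matrix.fromRows_apply_inr]
        simp [GammaBar, GammaHat, Matrix.fromRows, hj.1,
          abs_mul, abs_of_pos (hγpos k), abs_of_nonneg (hΓ _ _)]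
      rw [Finset.sum_congr rfl h1]
      have hd : GammaBar Γ a γ (Sum.inr k) (Sum.inr k) = 1 - γ k * Γ (Sum.inr k) (Sum.inr k) := by
        rw [GammaBar, Matrix.fromRows_apply_inr]
        simp [GammaBar, GammaHat, Matrix.fromRows]
      rw [hd, Real.norm_eq_abs, abs_of_pos hdiag]
      have hsum : ∑ j ∈ Finset.univ.erase (Sum.inr k : Fin m ⊕ Fin n), γ k * Γ (Sum.inr k) j
          = γ k * ∑ j, Γ (Sum.inr k) j - γ k * Γ (Sum.inr k) (Sum.inr k) := by
        rw [← Finset.mul_sum, Finset.sum_erase_eq_sub (Finset.mem_univ _), mul_sub]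
      rw [hsum]
      linarith [hγ k]
  have hdet : (GammaBar Γ a γ).det ≠ 0 := det_ne_zero_of_sum_row_lt_diag hdom
  have hunit : IsUnit (GammaBar Γ a γ) := (Matrix.isUnit_iff_isUnit_det _).2 (isUnit_iff_ne_zero.2 hdet)
  have hbar : ∀ u : Fin m ⊕ Fin n → ℝ,
      ((GammaTilde Γ a).mulVec u = bTilde n0 α β a ∧ (GammaHat Γ γ).mulVec u = bHat n0 γ) ↔
        (GammaBar Γ a γ).mulVec u = bBar n0 α β a γ := by
    intro u
    rw [GammaBar, Matrix.fromRows_mulVec, bBar, Sum.elim_eq_iff]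
  have key : ∀ u : Fin m ⊕ Fin n → ℝ,
      (GammaBar Γ a γ).mulVec u = bBar n0 α β a γ ↔
        u = (GammaBar Γ a γ)⁻¹.mulVec (bBar n0 α β a γ) := by
    intro u
    constructor
    · intro h
      rw [← h, Matrix.mulVec_mulVec, Matrix.nonsing_inv_mul _ (isUnit_iff_ne_zero.2 hdet),
        Matrix.one_mulVec]
    · rintro rfl
      rw [Matrix.mulVec_mulVec, Matrix.mul_nonsing_inv _ (isUnit_iff_ne_zero.2 hdet),
        Matrix.one_mulVec]
  have hstar : (GammaTilde Γ a).mulVec ((GammaBar Γ a γ)⁻¹.mulVec (bBar n0 α β a γ)) =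
        bTilde n0 α β a ∧
      (GammaHat Γ γ).mulVec ((GammaBar Γ a γ)⁻¹.mulVec (bBar n0 α β a γ)) = bHat n0 γ :=
    (hbar _).2 ((key _).2 rfl)
  refine ⟨hunit, fun u => (hbar u).trans (key u), hstar.1, fun k => le_of_eq ?_⟩
  rw [hstar.2]
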